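/- Let G = R ⋊_α C where ν(G) is nilpotent in R. A pair (g, g') ∈ G² generates G if and only if (σ(g), σ(g')) generates C and D_a(g,g') is a unit of R/ν(G)R. -/

import Mathlib

/-- The action of a group `C` on `M` by additive automorphisms, packaged as a
homomorphism `C →* MulAut (Multiplicative M)`. -/
def sdAction (C M : Type*) [Group C] [AddCommGroup M] [DistribMulAction C M] :
    C →* MulAut (Multiplicative M) where
  toFun c := AddEquiv.toMultiplicative (DistribMulAction.toAddAut C M c)
  map_one' := by ext x; simp
  map_mul' c c' := by ext x; simp [mul_smul]

/-- `∂_α(k)`: the Fox derivative `∂_α(k) = 1 + α + ⋯ + α^(k-1)` for `k ≥ 0`,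
and `∂_α(k) = -α⁻¹·∂_{α⁻¹}(-k)` for `k < 0`. -/
def delta {R : Type*} [CommRing R] (α : Rˣ) : ℤ → R
  | (k : ℕ) => ∑ i ∈ Finset.range k, (α : R) ^ i
  | (Int.negSucc k) => -((α⁻¹ : Rˣ) : R) * ∑ i ∈ Finset.range (k + 1), ((α⁻¹ : Rˣ) : R) ^ i

section aux
variable {R C : Type*} [CommRing R] [Group C] (χ : C →* Rˣ)

lemma delta_coe_nat {R : Type*} [CommRing R] (α : Rˣ) (n : ℕ) :
    delta α (n : ℤ) = ∑ i ∈ Finset.range n, (α : R) ^ i := rfl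

lemma delta_negSucc' {R : Type*} [CommRing R] (α : Rˣ) (n : ℕ) :
    delta α (Int.negSucc n) = -((α⁻¹ : Rˣ) : R) * ∑ i ∈ Finset.range (n + 1), ((α⁻¹ : Rˣ) : R) ^ i := rfl

lemma sd_act (c : C) (t : R) :
    ((sdAction Rˣ R).comp χ c) (Multiplicative.ofAdd t) = Multiplicative.ofAdd ((χ c : R) * t) := by
  simp [sdAction, Units.smul_def]

lemma sd_mul (s t : R) (c d : C) :
    (⟨.ofAdd s, c⟩ * ⟨.ofAdd t, d⟩ : Multiplicative R ⋊[(sdAction Rˣ R).comp χ] C)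
      = ⟨.ofAdd (s + (χ c : R) * t), c * d⟩ := by
  ext
  · show Multiplicative.ofAdd s * _ = _
    rw [sd_act, ← ofAdd_add]
    rfl
  · rfl

lemma sd_inv (s : R) (c : C) :
    (⟨.ofAdd s, c⟩ : Multiplicative R ⋊[(sdAction Rˣ R).comp χ] C)⁻¹
      = ⟨.ofAdd ((χ c⁻¹ : R) * -s), c⁻¹⟩ := by
  ext
  · show ((sdAction Rˣ R).comp χ c⁻¹) (Multiplicative.ofAdd s)⁻¹ = _
    rw [← ofAdd_neg, sd_act]
    rfl
  · rfl

end aux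

section aux2
variable {R C : Type*} [CommRing R] [Group C] (χ : C →* Rˣ)

lemma sd_pow_nat (s : R) (c : C) (n : ℕ) :
    (⟨.ofAdd s, c⟩ : Multiplicative R ⋊[(sdAction Rˣ R).comp χ] C) ^ n
      = ⟨.ofAdd (delta (χ c) (n : ℤ) * s), c ^ n⟩ := by
  induction n with
  | zero =>
    rw [pow_zero, delta_coe_nat]
    simp only [Nat.cast_ofNat, Finset.range_zero, Finset.sum_empty, zero_mul, pow_zero]
    rfl
  | succ n ih =>
    rw [pow_succ', ih, sd_mul, delta_coe_nat, delta_coe_nat, geom_sum_succ]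
    rw [SemidirectProduct.ext_iff]
    refine ⟨?_, (pow_succ' c n).symm⟩
    exact congrArg Multiplicative.ofAdd (by ring)

lemma sd_zpow (s : R) (c : C) (m : ℤ) :
    (⟨.ofAdd s, c⟩ : Multiplicative R ⋊[(sdAction Rˣ R).comp χ] C) ^ m
      = ⟨.ofAdd (delta (χ c) m * s), c ^ m⟩ := by
  cases m with
  | ofNat n => rw [Int.ofNat_eq_coe, zpow_natCast, zpow_natCast, sd_pow_nat]
  | negSucc n =>
    rw [zpow_negSucc, ← inv_pow, sd_inv, sd_pow_nat, delta_coe_nat, delta_negSucc']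
    have h1 : (χ c⁻¹ : R) = ((χ c)⁻¹ : Rˣ) := by rw [map_inv]
    have : c⁻¹ ^ (n+1) = c ^ Int.negSucc n := by
      rw [zpow_negSucc, inv_pow]
    rw [this]
    congr 1
    rw [h1]
    congr 1
    ring

end aux2

section aux3
variable {R : Type*} [CommRing R]

lemma delta_zero (α : Rˣ) : delta α (0 : ℤ) = 0 := by
  have : ((0:ℕ) : ℤ) = 0 := rfl
  rw [← this, delta_coe_nat]
  simp

lemma delta_one' (α : Rˣ) : delta α (1 : ℤ) = 1 := by
  have : ((1:ℕ) : ℤ) = 1 := rfl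
  rw [← this, delta_coe_nat]
  simp

lemma delta_add (α : Rˣ) (m m' : ℤ) :
    delta α (m + m') = delta α m + ((α ^ m : Rˣ) : R) * delta α m' := by
  have key : (⟨.ofAdd (1:R), α⟩ : Multiplicative R ⋊[(sdAction Rˣ R).comp (MonoidHom.id Rˣ)] Rˣ) ^ (m + m')
      = (⟨.ofAdd (1:R), α⟩ : Multiplicative R ⋊[(sdAction Rˣ R).comp (MonoidHom.id Rˣ)] Rˣ) ^ m *
        (⟨.ofAdd (1:R), α⟩ : Multiplicative R ⋊[(sdAction Rˣ R).comp (MonoidHom.id Rˣ)] Rˣ) ^ m' :=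
    zpow_add _ m m'
  rw [sd_zpow, sd_zpow, sd_zpow, sd_mul] at key
  have h1 := congrArg SemidirectProduct.left key
  simp only at h1
  have h2 := Multiplicative.ofAdd.injective h1
  simpa [MonoidHom.id_apply, mul_one] using h2

lemma delta_neg (α : Rˣ) (m : ℤ) :
    ((α ^ m : Rˣ) : R) * delta α (-m) = - delta α m := by
  have := delta_add α m (-m)
  rw [add_neg_cancel, delta_zero] at this
  linear_combination -this

lemma one_sub_mul_delta (α : Rˣ) (m : ℤ) :
    (1 - (α : R)) * delta α m = 1 - ((α ^ m : Rˣ) : R) := by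
  have h1 := delta_add α 1 m
  have h2 := delta_add α m 1
  rw [add_comm (1:ℤ) m] at h1
  rw [h1, delta_one', zpow_one] at h2
  rw [mul_one] at h2
  linear_combination -h2

end aux3

section aux4
variable {R S : Type*} [CommRing R] [CommRing S]

lemma delta_map (f : R →+* S) (α : Rˣ) (m : ℤ) :
    f (delta α m) = delta (Units.map (f : R →* S) α) m := by
  cases m with
  | ofNat n =>
    rw [Int.ofNat_eq_coe, delta_coe_nat, delta_coe_nat]
    simp [Units.coe_map]
  | negSucc n =>
    rw [delta_negSucc', delta_negSucc']
    simp [Units.coe_map, ← map_inv]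

lemma delta_one_base (m : ℤ) : delta (1 : Rˣ) m = (m : R) := by
  cases m with
  | ofNat n =>
    rw [Int.ofNat_eq_coe, delta_coe_nat]
    simp
  | negSucc n =>
    rw [delta_negSucc']
    simp [Int.negSucc_eq]

lemma mem_closure_pair_of_commute {Gr : Type*} [Group Gr] {x y z : Gr} (h : Commute x y)
    (hz : z ∈ Subgroup.closure ({x, y} : Set Gr)) : ∃ u v : ℤ, x ^ u * y ^ v = z := by
  induction hz using Subgroup.closure_induction with
  | mem g hg =>
    rcases hg with rfl | rfl
    · exact ⟨1, 0, by simp⟩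
    · exact ⟨0, 1, by simp⟩
  | one => exact ⟨0, 0, by simp⟩
  | mul g g' _ _ ih ih' =>
    obtain ⟨u, v, rfl⟩ := ih
    obtain ⟨u', v', rfl⟩ := ih'
    refine ⟨u + u', v + v', ?_⟩
    have hc : Commute (y ^ v) (x ^ u') := (h.symm.zpow_zpow v u')
    rw [zpow_add, zpow_add, mul_assoc, mul_assoc, ← mul_assoc (y ^ v), hc.eq, mul_assoc]
  | inv g _ ih =>
    obtain ⟨u, v, rfl⟩ := ih
    refine ⟨-u, -v, ?_⟩
    have hc : Commute (x ^ (-u)) (y ^ (-v)) := (h.zpow_zpow _ _)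
    rw [mul_inv_rev, ← zpow_neg, ← zpow_neg, hc.eq]

end aux4

section qmap
variable {R S C : Type*} [CommRing R] [CommRing S] [Group C]

/-- The hom between semidirect products induced by a ring hom. -/
def qhom (χ : C →* Rˣ) (f : R →+* S) :
    (Multiplicative R ⋊[(sdAction Rˣ R).comp χ] C) →*
      (Multiplicative S ⋊[(sdAction Sˣ S).comp ((Units.map (f : R →* S)).comp χ)] C) :=
  SemidirectProduct.map (AddMonoidHom.toMultiplicative f.toAddMonoidHom) (MonoidHom.id C)
    (by
      intro c
      ext x
      show Multiplicative.ofAdd (f ((χ c : R) * x))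
        = Multiplicative.ofAdd ((f ((χ c : R))) * f x)
      rw [map_mul])

lemma qhom_mk (χ : C →* Rˣ) (f : R →+* S) (t : R) (c : C) :
    qhom χ f ⟨.ofAdd t, c⟩ = ⟨.ofAdd (f t), c⟩ := rfl

end qmap

/-- In `G = R ⋊_α C` with `C = ⟨a⟩` cyclic acting on `R` via `χ : C →* Rˣ`
(`α = χ a`), assume the norm element `ν = ∑ᶠ c : C, χ c` is nilpotent. A pair
`(g, g') = (r·a^k, r'·a^{k'})` generates `G` if and only if `(a^k, a^{k'})`
generates `C` and `D_a(g,g')` is a unit of `R/νR`. -/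
theorem stmt_15 {R C : Type*} [CommRing R] [Group C]
    (a : C) (hC : ∀ c : C, c ∈ Subgroup.zpowers a)
    (χ : C →* Rˣ)
    (hR : Subring.closure (Set.range fun c : C => ((χ c : R))) = ⊤)
    (hnil : IsNilpotent (∑ᶠ c : C, ((χ c : R))))
    (r r' : R) (k k' : ℤ)
    (g g' : Multiplicative R ⋊[(sdAction Rˣ R).comp χ] C)
    (hg : g = ⟨Multiplicative.ofAdd r, a ^ k⟩)
    (hg' : g' = ⟨Multiplicative.ofAdd r', a ^ k'⟩) :
    Subgroup.closure {g, g'} = ⊤ ↔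
      Subgroup.closure ({a ^ k, a ^ k'} : Set C) = ⊤ ∧
        IsUnit (Ideal.Quotient.mk (Ideal.span {∑ᶠ c : C, ((χ c : R))})
          (r * delta (χ a) k' - r' * delta (χ a) k)) := by
  set ν : R := ∑ᶠ c : C, ((χ c : R)) with hν
  set α : Rˣ := χ a with hα
  set D : R := r * delta α k' - r' * delta α k with hD
  set H : Subgroup (Multiplicative R ⋊[(sdAction Rˣ R).comp χ] C) := Subgroup.closure {g, g'}
    with hH
  have hmapH : Subgroup.map SemidirectProduct.rightHom H = Subgroup.closure {a ^ k, a ^ k'} := by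
    rw [hH, MonoidHom.map_closure]
    congr 1
    rw [Set.image_pair, hg, hg']
    rfl
  constructor
  · intro hT
    have hCgen : Subgroup.closure ({a ^ k, a ^ k'} : Set C) = ⊤ := by
      rw [← hmapH, hT, ← MonoidHom.range_eq_map]
      exact MonoidHom.range_eq_top_of_surjective _ SemidirectProduct.rightHom_surjective
    refine ⟨hCgen, ?_⟩
    set J : Ideal R := Ideal.span {ν, D} with hJ
    suffices hJtop : J = ⊤ by
      have h1 : (1 : R) ∈ J := hJtop ▸ Submodule.mem_top
      rw [hJ, Ideal.mem_span_pair] at h1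
      obtain ⟨x, y, hxy⟩ := h1
      have hν0 : Ideal.Quotient.mk (Ideal.span {ν}) ν = 0 :=
        Ideal.Quotient.eq_zero_iff_mem.mpr (Ideal.mem_span_singleton_self ν)
      refine IsUnit.of_mul_eq_one (Ideal.Quotient.mk _ y) ?_
      have h2 := congrArg (Ideal.Quotient.mk (Ideal.span {ν})) hxy
      rw [map_add, map_mul, map_mul, hν0, mul_zero, zero_add, map_one, mul_comm] at h2
      exact h2
    set f : R →+* R ⧸ J := Ideal.Quotient.mk J with hfdef
    set χT : C →* (R ⧸ J)ˣ := (Units.map (f : R →* R ⧸ J)).comp χ with hχTdef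
    set q := qhom χ f with hqdef
    have hmkD : f D = 0 :=
      Ideal.Quotient.eq_zero_iff_mem.mpr (Ideal.subset_span (Set.mem_insert_of_mem _ rfl))
    have hmkν : f ν = 0 :=
      Ideal.Quotient.eq_zero_iff_mem.mpr (Ideal.subset_span (Set.mem_insert _ _))
    have hqg : q g = ⟨.ofAdd (f r), a ^ k⟩ := by rw [hg]; rfl
    have hqg' : q g' = ⟨.ofAdd (f r'), a ^ k'⟩ := by rw [hg']; rfl
    have hqsurj : Function.Surjective q := by
      rintro ⟨l, c⟩
      obtain ⟨t, ht⟩ := Ideal.Quotient.mk_surjective l.toAdd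
      refine ⟨⟨.ofAdd t, c⟩, ?_⟩
      rw [qhom_mk]
      exact SemidirectProduct.ext (by rw [show f t = Multiplicative.toAdd l from ht]; rfl) rfl
    have hgen : Subgroup.closure {q g, q g'} = ⊤ := by
      have h3 := MonoidHom.map_closure q {g, g'}
      rw [← hH, hT, Set.image_pair] at h3
      rw [← h3, ← MonoidHom.range_eq_map]
      exact MonoidHom.range_eq_top_of_surjective _ hqsurj
    have hDJ : D ∈ J := Ideal.subset_span (Set.mem_insert_of_mem _ rfl)
    have hcoeT : ∀ m : ℤ, ((χT (a ^ m) : (R ⧸ J)ˣ) : R ⧸ J) = f ((α ^ m : Rˣ) : R) := by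
      intro m
      rw [hχTdef]
      show ((Units.map (f : R →* R ⧸ J) (χ (a ^ m)) : (R ⧸ J)ˣ) : R ⧸ J) = _
      rw [Units.coe_map, map_zpow, hα]
      rfl
    have hcomm : Commute (q g) (q g') := by
      show q g * q g' = q g' * q g
      rw [hqg, hqg', sd_mul, sd_mul]
      refine SemidirectProduct.ext ?_ ?_
      · show Multiplicative.ofAdd (f r + ((χT (a ^ k) : (R ⧸ J)ˣ) : R ⧸ J) * f r')
          = Multiplicative.ofAdd (f r' + ((χT (a ^ k') : (R ⧸ J)ˣ) : R ⧸ J) * f r)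
        refine congrArg Multiplicative.ofAdd ?_
        rw [hcoeT, hcoeT, ← map_mul, ← map_mul, ← map_add, ← map_add, hfdef,
          Ideal.Quotient.mk_eq_mk_iff_sub_mem]
        have heq : (r + ((α ^ k : Rˣ) : R) * r') - (r' + ((α ^ k' : Rˣ) : R) * r)
            = (1 - (α : R)) * D := by
          rw [hD]
          linear_combination r' * (one_sub_mul_delta α k) - r * (one_sub_mul_delta α k')
        rw [heq]
        exact Ideal.mul_mem_left _ _ hDJ
      · show a ^ k * a ^ k' = a ^ k' * a ^ k
        rw [← zpow_add, ← zpow_add, add_comm]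
    have hrep : ∀ z : Multiplicative (R ⧸ J) ⋊[(sdAction (R ⧸ J)ˣ (R ⧸ J)).comp χT] C,
        ∃ u v : ℤ, (q g) ^ u * (q g') ^ v = z := fun z =>
      mem_closure_pair_of_commute hcomm (by rw [hgen]; trivial)
    have hcommAll : ∀ x y : Multiplicative (R ⧸ J) ⋊[(sdAction (R ⧸ J)ˣ (R ⧸ J)).comp χT] C,
        x * y = y * x := by
      intro x y
      obtain ⟨u, v, rfl⟩ := hrep x
      obtain ⟨u', v', rfl⟩ := hrep y
      exact (Commute.mul_left
        (Commute.mul_right ((Commute.refl (q g)).zpow_zpow u u') (hcomm.zpow_zpow u v'))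
        (Commute.mul_right (hcomm.symm.zpow_zpow v u')
          ((Commute.refl (q g')).zpow_zpow v v'))).eq
    have hα1 : ((χT a : (R ⧸ J)ˣ) : R ⧸ J) = 1 := by
      have h4 := hcommAll ⟨.ofAdd (0 : R ⧸ J), a⟩ ⟨.ofAdd (1 : R ⧸ J), (1:C)⟩
      rw [sd_mul, sd_mul] at h4
      have h6 := Multiplicative.ofAdd.injective (congrArg SemidirectProduct.left h4)
      rw [map_one, Units.val_one, mul_zero, add_zero, mul_one, zero_add] at h6
      exact h6
    have hχTone : ∀ c : C, χT c = 1 := by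
      intro c
      obtain ⟨m, hm⟩ := Subgroup.mem_zpowers_iff.mp (hC c)
      have h7 : χT a = 1 := Units.ext (by rw [hα1, Units.val_one])
      rw [← hm, map_zpow, h7, one_zpow]
    have hforder : ∀ w : ℤ, a ^ w = 1 → ((w : ℤ) : R ⧸ J) = 0 := by
      intro w hw
      have hdvd : (orderOf a : ℤ) ∣ w := orderOf_dvd_iff_zpow_eq_one.mpr hw
      by_cases hn : orderOf a = 0
      · rw [hn] at hdvd
        norm_num at hdvd
        rw [hdvd]
        norm_num
      · have hfin : IsOfFinOrder a := by
          by_contra h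
          exact hn (orderOf_eq_zero_iff.mpr h)
        have hfinC : Finite C := by
          have h7 : (Subgroup.zpowers a : Set C).Finite := hfin.finite_zpowers
          have h8 : (Subgroup.zpowers a : Set C) = Set.univ := by
            ext c; simpa using hC c
          rw [h8] at h7
          exact Set.finite_univ_iff.mp h7
        haveI : Fintype C := Fintype.ofFinite C
        have hνsum : ν = ∑ c : C, ((χ c : R)) := by
          rw [hν]; exact finsum_eq_sum_of_fintype _
        have hfχ : ∀ c : C, f ((χ c : R)) = 1 := by
          intro c
          have h9 := congrArg (Units.val) (hχTone c)
          rw [Units.val_one] at h9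
          exact h9
        have hcard : ((Fintype.card C : ℕ) : R ⧸ J) = 0 := by
          have h9 : f ν = ((Fintype.card C : ℕ) : R ⧸ J) := by
            rw [hνsum, map_sum, Finset.sum_congr rfl (fun c _ => hfχ c)]
            simp
          rw [← h9]
          exact hmkν
        have hoeq : orderOf a = Nat.card C := orderOf_eq_card_of_forall_mem_zpowers hC
        obtain ⟨w', rfl⟩ := hdvd
        push_cast
        rw [hoeq, Nat.card_eq_fintype_card]
        push_cast at hcard
        rw [hcard, zero_mul]
    have hfdelta : ∀ m : ℤ, f (delta α m) = ((m : ℤ) : R ⧸ J) := by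
      intro m
      rw [delta_map f α m]
      have h10 : Units.map (f : R →* R ⧸ J) α = χT a := by rw [hχTdef, hα]; rfl
      rw [h10, hχTone a, delta_one_base]
    have hrel1 : f r * ((k' : ℤ) : R ⧸ J) - f r' * ((k : ℤ) : R ⧸ J) = 0 := by
      have h11 := hmkD
      rw [hD, map_sub, map_mul, map_mul, hfdelta, hfdelta] at h11
      exact h11
    obtain ⟨u, v, huv⟩ := hrep ⟨.ofAdd (1 : R ⧸ J), (1 : C)⟩
    rw [hqg, hqg', sd_zpow, sd_zpow, sd_mul] at huv
    have hl := congrArg SemidirectProduct.left huv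
    have hr := congrArg SemidirectProduct.right huv
    simp only at hl hr
    have hr' : a ^ (k * u + k' * v) = 1 := by
      rw [zpow_add, zpow_mul, zpow_mul]
      exact hr
    have hcast1 := hforder _ hr'
    have hχTone' : ∀ c : C, ((Units.map ((f : R →+* R ⧸ J) : R →* R ⧸ J)).comp χ) c = 1 :=
      fun c => hχTone c
    have hl' : ((u : ℤ) : R ⧸ J) * f r + ((v : ℤ) : R ⧸ J) * f r' = 1 := by
      have h12 := Multiplicative.ofAdd.injective hl
      rw [hχTone', hχTone', hχTone', delta_one_base, delta_one_base, Units.val_one,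
        one_mul] at h12
      exact h12
    have haC : a ∈ Subgroup.closure ({a ^ k, a ^ k'} : Set C) := by rw [hCgen]; trivial
    obtain ⟨e, e', hee⟩ := mem_closure_pair_of_commute ((Commute.refl a).zpow_zpow k k') haC
    have hee' : a ^ (k * e + k' * e' - 1) = 1 := by
      rw [zpow_sub, zpow_add, zpow_mul, zpow_mul, zpow_one, hee]
      exact mul_inv_cancel a
    have hcast2 := hforder _ hee'
    push_cast at hcast1 hcast2
    have hK' : ((k' : ℤ) : R ⧸ J) = 0 := by
      linear_combination ((u : ℤ) : R ⧸ J) * hrel1 + f r' * hcast1 - ((k' : ℤ) : R ⧸ J) * hl'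
    have hK : ((k : ℤ) : R ⧸ J) = 0 := by
      linear_combination (-((v : ℤ) : R ⧸ J)) * hrel1 + f r * hcast1 - ((k : ℤ) : R ⧸ J) * hl'
    have hone : (1 : R ⧸ J) = 0 := by
      linear_combination -hcast2 + ((e : ℤ) : R ⧸ J) * hK + ((e' : ℤ) : R ⧸ J) * hK'
    rw [Ideal.eq_top_iff_one]
    refine Ideal.Quotient.eq_zero_iff_mem.mp ?_
    rw [map_one]
    exact hone
  · rintro ⟨hCgen, hUnit⟩
    -- surjectivity onto C
    have hsurj : ∀ c : C, ∃ s : R, (⟨.ofAdd s, c⟩ :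
        Multiplicative R ⋊[(sdAction Rˣ R).comp χ] C) ∈ H := by
      intro c
      have hc : c ∈ Subgroup.map SemidirectProduct.rightHom H := by
        rw [hmapH, hCgen]; trivial
      obtain ⟨x, hx, hxc⟩ := hc
      refine ⟨x.left.toAdd, ?_⟩
      have : x = ⟨.ofAdd x.left.toAdd, c⟩ := by
        ext
        · rfl
        · exact hxc
      rwa [← this]
    set I : Set R := {t : R | (⟨.ofAdd t, (1:C)⟩ :
        Multiplicative R ⋊[(sdAction Rˣ R).comp χ] C) ∈ H} with hI
    have hIadd : ∀ t ∈ I, ∀ t' ∈ I, t + t' ∈ I := by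
      intro t ht t' ht'
      have hm := H.mul_mem ht ht'
      rw [sd_mul] at hm
      rw [map_one, Units.val_one, one_mul, mul_one] at hm
      exact hm
    have hIneg : ∀ t ∈ I, -t ∈ I := by
      intro t ht
      have hm := H.zpow_mem ht (-1 : ℤ)
      rw [sd_zpow, map_one, delta_one_base, one_zpow] at hm
      have he : ((-1 : ℤ) : R) * t = -t := by push_cast; ring
      rw [he] at hm
      exact hm
    have hIsmul : ∀ (c : C), ∀ t ∈ I, (χ c : R) * t ∈ I := by
      intro c t ht
      obtain ⟨s, hs⟩ := hsurj c
      have hm := H.mul_mem (H.mul_mem hs ht) (H.inv_mem hs)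
      rw [sd_mul, sd_inv, sd_mul] at hm
      have key : s + (χ c : R) * t + (χ c : R) * ((χ c⁻¹ : R) * -s) = (χ c : R) * t := by
        rw [map_inv, ← mul_assoc, Units.mul_inv]
        ring
      rw [mul_one] at hm
      rw [key, mul_inv_cancel] at hm
      exact hm
    have hI0 : (0 : R) ∈ I := by
      have h1 : (⟨.ofAdd (0:R), (1:C)⟩ :
          Multiplicative R ⋊[(sdAction Rˣ R).comp χ] C) = 1 := SemidirectProduct.ext rfl rfl
      show _ ∈ H
      rw [h1]
      exact H.one_mem
    have hImul : ∀ (w : R), ∀ t ∈ I, w * t ∈ I := by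
      have key : ∀ w ∈ Subring.closure (Set.range fun c : C => ((χ c : R))),
          ∀ t ∈ I, w * t ∈ I := by
        intro w hw
        induction hw using Subring.closure_induction with
        | mem x hx =>
            obtain ⟨c, rfl⟩ := hx
            exact fun t ht => hIsmul c t ht
        | zero => intro t ht; rw [zero_mul]; exact hI0
        | one => intro t ht; rw [one_mul]; exact ht
        | add x y hx hy ihx ihy =>
            intro t ht
            rw [add_mul]
            exact hIadd _ (ihx t ht) _ (ihy t ht)
        | neg x hx ihx => intro t ht; rw [neg_mul]; exact hIneg _ (ihx t ht)
        | mul x y hx hy ihx ihy =>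
            intro t ht
            rw [mul_assoc]
            exact ihx _ (ihy t ht)
      exact fun w => key w (by rw [hR]; trivial)
    -- get an element of H over a
    obtain ⟨s, hs⟩ := hsurj a
    have hks : ∀ (m : ℤ) (x : R) (gx : Multiplicative R ⋊[(sdAction Rˣ R).comp χ] C),
        gx = ⟨.ofAdd x, a ^ m⟩ → gx ∈ H → x - delta α m * s ∈ I := by
      intro m x gx hgx hgxH
      have hm := H.mul_mem hgxH (H.zpow_mem hs (-m))
      rw [hgx, sd_zpow, sd_mul] at hm
      have h1 : (χ (a ^ m) : R) * (delta α (-m) * s) = -(delta α m * s) := by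
        rw [map_zpow, ← mul_assoc, ← hα, delta_neg]
        ring
      rw [h1, ← zpow_add, add_neg_cancel, zpow_zero] at hm
      have h2 : x + -(delta α m * s) = x - delta α m * s := by ring
      rw [h2] at hm
      exact hm
    have hgH : g ∈ H := Subgroup.subset_closure (Set.mem_insert _ _)
    have hg'H : g' ∈ H := Subgroup.subset_closure (Set.mem_insert_of_mem _ rfl)
    have hk1 : r - delta α k * s ∈ I := hks k r g hg hgH
    have hk2 : r' - delta α k' * s ∈ I := hks k' r' g' hg' hg'H
    have hDI : D ∈ I := by
      have h1 := hIadd _ (hImul (delta α k') _ hk1) _ (hIneg _ (hImul (delta α k) _ hk2))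
      have h2 : delta α k' * (r - delta α k * s) + -(delta α k * (r' - delta α k' * s)) = D := by
        rw [hD]; ring
      rwa [h2] at h1
    -- D is a unit of R
    have hDunit : IsUnit D := by
      have := hUnit
      rw [isUnit_iff_exists] at this
      obtain ⟨b, hb, -⟩ := this
      obtain ⟨y, rfl⟩ := Ideal.Quotient.mk_surjective b
      rw [← map_mul, ← map_one (Ideal.Quotient.mk (Ideal.span {ν})),
        Ideal.Quotient.mk_eq_mk_iff_sub_mem, Ideal.mem_span_singleton] at hb
      obtain ⟨t, ht⟩ := hb
      have hnt : IsNilpotent (ν * t) := by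
        obtain ⟨n0, hn0⟩ := hnil
        exact ⟨n0, by rw [mul_pow, hn0, zero_mul]⟩
      have hu1 : IsUnit (1 + ν * t) := by
        obtain ⟨n0, hn0⟩ := hnt
        exact IsNilpotent.isUnit_add_left_of_commute ⟨n0, hn0⟩ isUnit_one (Commute.all _ _)
      have hDy : D * y = 1 + ν * t := by linear_combination ht
      exact isUnit_of_mul_isUnit_left (hDy ▸ hu1)
    have h1I : (1 : R) ∈ I := by
      obtain ⟨u, hu⟩ := hDunit
      have := hImul ((u⁻¹ : Rˣ) : R) D hDI
      rw [← hu, Units.inv_mul] at this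
      exact this
    have hIall : ∀ t : R, t ∈ I := by
      intro t
      have := hImul t 1 h1I
      rwa [mul_one] at this
    rw [Subgroup.eq_top_iff']
    rintro ⟨l, c⟩
    obtain ⟨s', hs'⟩ := hsurj c
    have h2 : (⟨.ofAdd (l.toAdd - s'), (1:C)⟩ :
        Multiplicative R ⋊[(sdAction Rˣ R).comp χ] C) ∈ H := hIall _
    have h3 := H.mul_mem h2 hs'
    rw [sd_mul, map_one, Units.val_one, one_mul, one_mul, sub_add_cancel] at h3
    rwa [show Multiplicative.ofAdd l.toAdd = l from rfl] at h3
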